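/- Let m, n ≥ 2 and let p, q be coprime positive integers with p/q ≥ m²n. Then |pmn − q(mn)²| · (1 − 1/(mn) − 1/(p − qmn)) = |pn − q(mn)²| · (1 − 1/n) + |pmn − qm²n| · (1 − 1/m − 1/(p − qm)), where both sides are interpreted as rational numbers (assuming p − qmn > 0 and p − qm > 0). -/

import Mathlib

/-- The key norm computation of Section 2 of Greene–Ni: for m, n ≥ 2 and coprime
positive p, q with p/q ≥ m²n, the norm of the minimal surface for the torus knot
T(1,mn) equals the norm for the (1,n)-cable of the (1,m)-torus knot. -/
theorem stmt2 (m n p q : ℕ) (hm : 2 ≤ m) (hn : 2 ≤ n)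
    (hp : 0 < p) (hq : 0 < q) (hpq : Nat.Coprime p q)
    (h : (m : ℚ) ^ 2 * n ≤ (p : ℚ) / q)
    (h1 : 0 < (p : ℚ) - q * (m * n)) (h2 : 0 < (p : ℚ) - q * m) :
    |(p : ℚ) * m * n - q * (m * n) ^ 2| *
        (1 - 1 / (m * n : ℚ) - 1 / ((p : ℚ) - q * (m * n))) =
      |(p : ℚ) * n - q * (m * n) ^ 2| * (1 - 1 / (n : ℚ)) +
      |(p : ℚ) * m * n - q * m ^ 2 * n| *
        (1 - 1 / (m : ℚ) - 1 / ((p : ℚ) - q * m)) := by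
  have hm0 : (0 : ℚ) < m := by exact_mod_cast lt_of_lt_of_le (by norm_num) hm
  have hn0 : (0 : ℚ) < n := by exact_mod_cast lt_of_lt_of_le (by norm_num) hn
  have hq0 : (0 : ℚ) < q := by exact_mod_cast hq
  have hkey : (q : ℚ) * (m ^ 2 * n) ≤ p := by
    calc (q : ℚ) * (m ^ 2 * n) = (m ^ 2 * n) * q := by ring
    _ ≤ (p : ℚ) / q * q := by exact mul_le_mul_of_nonneg_right h hq0.le
    _ = p := by field_simp
  have e1 : |(p : ℚ) * m * n - q * (m * n) ^ 2| = (p : ℚ) * m * n - q * (m * n) ^ 2 := by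
    apply abs_of_nonneg
    have : (0:ℚ) ≤ (m * n) * ((p : ℚ) - q * (m * n)) := by positivity
    nlinarith [this]
  have e2 : |(p : ℚ) * n - q * (m * n) ^ 2| = (p : ℚ) * n - q * (m * n) ^ 2 := by
    apply abs_of_nonneg
    nlinarith [hkey, hn0]
  have e3 : |(p : ℚ) * m * n - q * m ^ 2 * n| = (p : ℚ) * m * n - q * m ^ 2 * n := by
    apply abs_of_nonneg
    have : (0:ℚ) ≤ (m * n) * ((p : ℚ) - q * m) := by positivity
    nlinarith [this]
  rw [e1, e2, e3]
  have a : (p : ℚ) - m * n * q ≠ 0 := by linarith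
  have b : (p : ℚ) - m * q ≠ 0 := by linarith
  field_simp
  ring
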